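/- Suppose g is concave and differentiable. If for a mixed stopping strategy p̂ the first-order condition f(x) − E_x[φ_p̂(X_1)] + g′(p̂_x h(x) + (1−p̂_x) E_x[ψ_p̂(X_1)]) · (h(x) − E_x[ψ_p̂(X_1)]) = 0 holds for every x ∈ E, then p̂ is an equilibrium. -/

import Mathlib

set_option linter.unusedSectionVars false


/-!
Analytic model of the time-inconsistent stopping framework of Christensen & Lindensjö,
"Time-inconsistent stopping, myopic adjustment & equilibrium stability".

A time-homogeneous Markov chain `X` on a finite state space `E` is encoded by its
transition matrix `P` (`P x y = P_x(X_1 = y)`).  A mixed stopping strategy is a vector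
`p ∈ [0,1]^E`; the associated stopping time is `τ_p = min {n ≥ 0 : Y_n ≤ p_{X_n}}`,
where the `Y_n` are i.i.d. uniform randomization devices.  The quantity
`phi P p f x = E_x[f(X_{τ_p})]` (with the convention `f(X_{τ_p}) := lim_n f(X_n)` on
`{τ_p = ∞}`, the limit existing a.s. by absorption) is realized analytically, via
dominated convergence, as the limit in `n` of the finite-horizon values
`phiSeq P p f n x = E_x[f(X_{τ_p ∧ n})]`, which satisfy the one-step recursion given
by the Markov property.  Likewise `step P v x = E_x[v(X_1)]`.
-/

open Filter

variable {E : Type*}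

/-- One-step expectation operator: `step P v x = E_x[v(X_1)] = ∑ y, P x y * v y`. -/
noncomputable def step [Fintype E] (P : E → E → ℝ) (v : E → ℝ) (x : E) : ℝ :=
  ∑ y, P x y * v y

/-- Finite-horizon value `phiSeq P p f n x = E_x[f(X_{τ_p ∧ n})]`. -/
noncomputable def phiSeq [Fintype E] (P : E → E → ℝ) (p f : E → ℝ) : ℕ → E → ℝ
  | 0 => f
  | n + 1 => fun x => p x * f x + (1 - p x) * step P (phiSeq P p f n) x

/-- `phi P p f x = E_x[f(X_{τ_p})]`, with the convention `f(X_{τ_p}) := lim_n f(X_n)`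
on `{τ_p = ∞}`; by dominated convergence it is the limit of the finite-horizon values. -/
noncomputable def phi [Fintype E] (P : E → E → ℝ) (p f : E → ℝ) (x : E) : ℝ :=
  limUnder atTop fun n => phiSeq P p f n x

/-- `P` is a transition matrix (row-stochastic). -/
def IsTransition [Fintype E] (P : E → E → ℝ) : Prop :=
  (∀ x y, 0 ≤ P x y) ∧ ∀ x, ∑ y, P x y = 1

/-- `a` is an absorbing state of the chain. -/
def IsAbsorbingState (P : E → E → ℝ) (a : E) : Prop := P a a = 1

/-- The chain is absorbing: from each starting state, some absorbing state is reached
with positive probability in a finite number of steps. -/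
def IsAbsorbingChain [Fintype E] [DecidableEq E] (P : E → E → ℝ) : Prop :=
  ∀ x : E, ∃ (a : E) (n : ℕ), IsAbsorbingState P a ∧ 0 < ((Matrix.of P) ^ n) x a

/-- A mixed stopping strategy: a vector in `[0,1]^E`. -/
def IsStrategy (p : E → ℝ) : Prop := ∀ x, p x ∈ Set.Icc (0 : ℝ) 1

/-- `Kval P f h g p x q
      = q f(x) + (1-q) E_x[φ_p(X_1)] + g (q h(x) + (1-q) E_x[ψ_p(X_1)])`. -/
noncomputable def Kval [Fintype E] (P : E → E → ℝ) (f h : E → ℝ) (g : ℝ → ℝ)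
    (p : E → ℝ) (x : E) (q : ℝ) : ℝ :=
  q * f x + (1 - q) * step P (phi P p f) x
    + g (q * h x + (1 - q) * step P (phi P p h) x)

/-- `Jval P f h g p x = φ_p(x) + g(ψ_p(x)) = E_x[f(X_{τ_p})] + g(E_x[h(X_{τ_p})])`. -/
noncomputable def Jval [Fintype E] (P : E → E → ℝ) (f h : E → ℝ) (g : ℝ → ℝ)
    (p : E → ℝ) (x : E) : ℝ :=
  phi P p f x + g (phi P p h x)

/-- Subgame perfect Nash equilibrium (condition (EqI)). -/
def IsEquilibrium [Fintype E] (P : E → E → ℝ) (f h : E → ℝ) (g : ℝ → ℝ)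
    (p : E → ℝ) : Prop :=
  ∀ x : E, ∀ q ∈ Set.Icc (0 : ℝ) 1, Kval P f h g p x q ≤ Jval P f h g p x


section AuxProof

open Finset

variable {E : Type*} [Fintype E] [DecidableEq E]

private lemma step_nonneg' (P : E → E → ℝ) (hP : IsTransition P) {v : E → ℝ}
    (hv : ∀ y, 0 ≤ v y) (x : E) : 0 ≤ step P v x :=
  Finset.sum_nonneg fun y _ => mul_nonneg (hP.1 x y) (hv y)

private lemma step_mono' (P : E → E → ℝ) (hP : IsTransition P) {v v' : E → ℝ}
    (hv : ∀ y, v y ≤ v' y) (x : E) : step P v x ≤ step P v' x :=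
  Finset.sum_le_sum fun y _ => mul_le_mul_of_nonneg_left (hv y) (hP.1 x y)

private lemma step_absorbing' (P : E → E → ℝ) (hP : IsTransition P) {a : E}
    (ha : P a a = 1) (v : E → ℝ) : step P v a = v a := by
  have hsum : ∑ y ∈ Finset.univ.erase a, P a y = 0 := by
    have h2 := hP.2 a
    rw [← Finset.add_sum_erase _ _ (Finset.mem_univ a), ha] at h2
    linarith
  have hz : ∀ y ∈ Finset.univ.erase a, P a y * v y = 0 := by
    intro y hy
    have h0 : P a y = 0 :=
      (Finset.sum_eq_zero_iff_of_nonneg (fun y _ => hP.1 a y)).mp hsum y hy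
    rw [h0, zero_mul]
  unfold step
  rw [← Finset.add_sum_erase _ _ (Finset.mem_univ a), Finset.sum_eq_zero hz, ha]
  ring

private lemma iter_nonneg' (P : E → E → ℝ) (hP : IsTransition P) {v : E → ℝ}
    (hv : ∀ y, 0 ≤ v y) : ∀ n x, 0 ≤ (step P)^[n] v x := by
  intro n
  induction n with
  | zero => simpa using hv
  | succ n ih =>
    intro x
    rw [Function.iterate_succ_apply']
    exact step_nonneg' P hP ih x

private lemma iter_mono' (P : E → E → ℝ) (hP : IsTransition P) {v v' : E → ℝ}
    (hv : ∀ y, v y ≤ v' y) : ∀ n x, (step P)^[n] v x ≤ (step P)^[n] v' x := by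
  intro n
  induction n with
  | zero => simpa using hv
  | succ n ih =>
    intro x
    rw [Function.iterate_succ_apply', Function.iterate_succ_apply']
    exact step_mono' P hP ih x

private lemma iter_smul' (P : E → E → ℝ) (c : ℝ) (v : E → ℝ) :
    ∀ n x, (step P)^[n] (fun y => c * v y) x = c * (step P)^[n] v x := by
  intro n
  induction n with
  | zero => intro x; rfl
  | succ n ih =>
    intro x
    rw [Function.iterate_succ_apply', Function.iterate_succ_apply']
    have hfun : (step P)^[n] (fun y => c * v y) = fun y => c * (step P)^[n] v y :=
      funext ih
    rw [hfun]
    generalize (step P)^[n] v = u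
    unfold step
    rw [Finset.mul_sum]
    exact Finset.sum_congr rfl fun y _ => by ring

private lemma iter_absorbing' (P : E → E → ℝ) (hP : IsTransition P) {a : E}
    (ha : P a a = 1) (v : E → ℝ) : ∀ n, (step P)^[n] v a = v a := by
  intro n
  induction n with
  | zero => rfl
  | succ n ih => rw [Function.iterate_succ_apply', step_absorbing' P hP ha, ih]

private lemma iter_one' (P : E → E → ℝ) (hP : IsTransition P) :
    ∀ n x, (step P)^[n] (fun _ => (1:ℝ)) x = 1 := by
  intro n
  induction n with
  | zero => intro x; rfl
  | succ n ih =>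
    intro x
    rw [Function.iterate_succ_apply']
    unfold step
    have : ∀ y, (step P)^[n] (fun _ => (1:ℝ)) y = 1 := ih
    calc (∑ y, P x y * (step P)^[n] (fun _ => (1:ℝ)) y) = ∑ y, P x y := by
          exact Finset.sum_congr rfl fun y _ => by rw [this y, mul_one]
      _ = 1 := hP.2 x

private lemma iter_matrix' (P : E → E → ℝ) (v : E → ℝ) :
    ∀ n x, (step P)^[n] v x = (((Matrix.of P) ^ n).mulVec v) x := by
  intro n
  induction n with
  | zero => intro x; simp [Matrix.mulVec_one]
  | succ n ih =>
    intro x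
    rw [Function.iterate_succ_apply']
    unfold step
    have h1 : ∀ y, (step P)^[n] v y = (((Matrix.of P) ^ n).mulVec v) y := ih
    have h2 : (∑ y, P x y * (((Matrix.of P) ^ n).mulVec v) y)
        = ((Matrix.of P).mulVec (((Matrix.of P) ^ n).mulVec v)) x := rfl
    calc (∑ y, P x y * (step P)^[n] v y)
        = ∑ y, P x y * (((Matrix.of P) ^ n).mulVec v) y :=
          Finset.sum_congr rfl fun y _ => by rw [h1 y]
      _ = ((Matrix.of P).mulVec (((Matrix.of P) ^ n).mulVec v)) x := h2
      _ = (((Matrix.of P) ^ (n+1)).mulVec v) x := by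
          rw [Matrix.mulVec_mulVec, ← pow_succ']

private lemma pow_entry_nonneg' (P : E → E → ℝ) (hP : IsTransition P) (n : ℕ) (x y : E) :
    0 ≤ ((Matrix.of P) ^ n) x y := by
  have h := iter_nonneg' P hP (v := fun z => if z = y then (1:ℝ) else 0)
    (fun z => by by_cases hz : z = y <;> simp [hz]) n x
  rw [iter_matrix'] at h
  simpa [Matrix.mulVec, dotProduct, mul_ite] using h

private lemma pow_row_sum' (P : E → E → ℝ) (hP : IsTransition P) (n : ℕ) (x : E) :
    ∑ y, ((Matrix.of P) ^ n) x y = 1 := by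
  have h := iter_one' P hP n x
  rw [iter_matrix'] at h
  simpa [Matrix.mulVec, dotProduct] using h

private lemma phi_fixed (P : E → E → ℝ) (hP : IsTransition P) (habs : IsAbsorbingChain P)
    (p : E → ℝ) (hp : IsStrategy p) (f : E → ℝ) (x : E) :
    phi P p f x = p x * f x + (1 - p x) * step P (phi P p f) x := by
  classical
  haveI : Nonempty E := ⟨x⟩
  -- the indicator of non-absorbing states
  set w : E → ℝ := fun y => if P y y = 1 then 0 else 1 with hw
  have hw0 : ∀ y, 0 ≤ w y := fun y => by by_cases hy : P y y = 1 <;> simp [hw, hy]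
  have hw1 : ∀ y, w y ≤ 1 := fun y => by by_cases hy : P y y = 1 <;> simp [hw, hy]
  have hwA : ∀ a, P a a = 1 → w a = 0 := fun a ha => by simp [hw, ha]
  have hstepw : ∀ y, step P w y ≤ w y := by
    intro y
    by_cases hy : P y y = 1
    · rw [step_absorbing' P hP hy]
    · calc step P w y ≤ step P (fun _ => 1) y := step_mono' P hP hw1 y
        _ = 1 := by unfold step; simpa using hP.2 y
        _ = w y := by simp [hw, hy]
  have hiter_le_w : ∀ n y, (step P)^[n] w y ≤ w y := by
    intro n
    induction n with
    | zero => intro y; exact le_rfl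
    | succ n ih =>
      intro y
      calc (step P)^[n+1] w y = (step P)^[n] (step P w) y := by
            rw [Function.iterate_succ_apply]
        _ ≤ (step P)^[n] w y := iter_mono' P hP hstepw n y
        _ ≤ w y := ih y
  have hanti : ∀ y, Antitone fun n => (step P)^[n] w y := by
    intro y
    apply antitone_nat_of_succ_le
    intro n
    calc (step P)^[n+1] w y = (step P)^[n] (step P w) y := by
          rw [Function.iterate_succ_apply]
      _ ≤ (step P)^[n] w y := iter_mono' P hP hstepw n y
  -- choose a uniform horizon N
  choose aF nF haF hposF using habs
  set N : ℕ := max 1 (Finset.univ.sup nF) with hN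
  have hN1 : 1 ≤ N := le_max_left _ _
  have hltone : ∀ y, (step P)^[N] w y < 1 := by
    intro y
    have hle : nF y ≤ N := le_trans (Finset.le_sup (Finset.mem_univ y)) (le_max_right _ _)
    refine lt_of_le_of_lt (hanti y hle) ?_
    show (step P)^[nF y] w y < 1
    rw [iter_matrix']
    set M := (Matrix.of P) ^ (nF y) with hM
    have hrow : ∑ z, M y z = 1 := pow_row_sum' P hP (nF y) y
    have hnn : ∀ z, 0 ≤ M y z := fun z => pow_entry_nonneg' P hP (nF y) y z
    have hWa : w (aF y) = 0 := hwA _ (haF y)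
    have hbound : ∀ z, M y z * w z ≤ M y z * (if z = aF y then 0 else 1) := by
      intro z
      by_cases hz : z = aF y
      · subst hz; simp [hWa]
      · simp only [if_neg hz]
        exact mul_le_mul_of_nonneg_left (hw1 z) (hnn z)
    have hsum1 : (M.mulVec w) y ≤ ∑ z, M y z * (if z = aF y then 0 else 1) :=
      Finset.sum_le_sum fun z _ => hbound z
    have hsum2 : ∑ z, M y z * (if z = aF y then 0 else 1) = 1 - M y (aF y) := by
      have h0 : ∀ z, M y z * (if z = aF y then (0:ℝ) else 1)
          = M y z - (if z = aF y then M y z else 0) := by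
        intro z; by_cases hz : z = aF y <;> simp [hz]
      rw [Finset.sum_congr rfl (fun z _ => h0 z), Finset.sum_sub_distrib, hrow,
        Finset.sum_ite_eq' Finset.univ (aF y) (fun z => M y z)]
      simp
    have hpos := hposF y
    rw [← hM] at hpos
    linarith [hsum1, hsum2, hpos]
  -- the contraction factor
  set ρ : ℝ := Finset.univ.sup' Finset.univ_nonempty (fun y => (step P)^[N] w y) with hρ
  have hρ0 : 0 ≤ ρ :=
    le_trans (iter_nonneg' P hP hw0 N x) (Finset.le_sup' _ (Finset.mem_univ x))
  have hρ1 : ρ < 1 := by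
    rw [hρ, Finset.sup'_lt_iff]
    intro y _
    exact hltone y
  have hNw : ∀ y, (step P)^[N] w y ≤ ρ * w y := by
    intro y
    by_cases hy : P y y = 1
    · rw [iter_absorbing' P hP hy, hwA y hy]
      simp [hwA y hy]
    · have h1 : w y = 1 := by simp [hw, hy]
      rw [h1, mul_one]
      exact Finset.le_sup' _ (Finset.mem_univ y)
  have hgeo : ∀ k y, (step P)^[k * N] w y ≤ ρ ^ k * w y := by
    intro k
    induction k with
    | zero => intro y; simp
    | succ k ih =>
      intro y
      have hkn : (k+1) * N = k * N + N := by ring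
      rw [hkn, Function.iterate_add_apply]
      calc (step P)^[k*N] ((step P)^[N] w) y
          ≤ (step P)^[k*N] (fun z => ρ * w z) y :=
            iter_mono' P hP hNw (k*N) y
        _ = ρ * (step P)^[k*N] w y := iter_smul' P ρ w (k*N) y
        _ ≤ ρ * (ρ ^ k * w y) := mul_le_mul_of_nonneg_left (ih y) hρ0
        _ = ρ ^ (k+1) * w y := by ring
  -- differences of the value iteration
  set d : ℕ → E → ℝ := fun n y => phiSeq P p f (n+1) y - phiSeq P p f n y with hd
  set M : (E → ℝ) → E → ℝ := fun v y => (1 - p y) * step P v y with hMop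
  have hd_rec : ∀ n, d (n+1) = M (d n) := by
    intro n
    funext y
    have hstep : step P (d n) y
        = step P (phiSeq P p f (n+1)) y - step P (phiSeq P p f n) y := by
      unfold step
      rw [← Finset.sum_sub_distrib]
      exact Finset.sum_congr rfl fun z _ => by simp only [hd]; ring
    show phiSeq P p f (n+2) y - phiSeq P p f (n+1) y = (1 - p y) * step P (d n) y
    rw [hstep]
    show (p y * f y + (1 - p y) * step P (phiSeq P p f (n+1)) y)
        - (p y * f y + (1 - p y) * step P (phiSeq P p f n) y) = _
    ring
  have hd_iter : ∀ n, d n = M^[n] (d 0) := by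
    intro n
    induction n with
    | zero => rfl
    | succ n ih =>
      rw [hd_rec n, ih]
      exact (Function.iterate_succ_apply' M n (d 0)).symm
  have hMiter : ∀ n (v w' : E → ℝ) (c : ℝ), (∀ y, 0 ≤ w' y) → (∀ y, |v y| ≤ c * w' y) →
      ∀ y, |M^[n] v y| ≤ c * (step P)^[n] w' y := by
    intro n
    induction n with
    | zero => intro v w' c _ hv y; simpa using hv y
    | succ n ih =>
      intro v w' c hw' hv y
      rw [Function.iterate_succ_apply, Function.iterate_succ_apply]
      refine ih (M v) (step P w') c (fun z => step_nonneg' P hP hw' z) ?_ y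
      intro z
      have hpz := hp z
      have h1 : |M v z| ≤ |step P v z| := by
        show |(1 - p z) * step P v z| ≤ |step P v z|
        rw [abs_mul]
        have habs1 : |1 - p z| ≤ 1 := by
          rw [abs_le]; constructor <;> [linarith [hpz.2]; linarith [hpz.1]]
        exact mul_le_of_le_one_left (abs_nonneg _) habs1
      refine h1.trans ?_
      have h2 : |step P v z| ≤ ∑ y, P z y * |v y| := by
        refine le_trans (Finset.abs_sum_le_sum_abs _ _) (le_of_eq ?_)
        exact Finset.sum_congr rfl fun y _ => by
          rw [abs_mul, abs_of_nonneg (hP.1 z y)]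
      refine h2.trans ?_
      calc (∑ y, P z y * |v y|) ≤ ∑ y, P z y * (c * w' y) :=
            Finset.sum_le_sum fun y _ => mul_le_mul_of_nonneg_left (hv y) (hP.1 z y)
        _ = c * step P w' z := by
            unfold step
            rw [Finset.mul_sum]
            exact Finset.sum_congr rfl fun y _ => by ring
  -- initial bound
  set C : ℝ := Finset.univ.sup' Finset.univ_nonempty (fun y => |d 0 y|) with hC
  have hC0 : 0 ≤ C := by
    rw [hC]
    exact le_trans (abs_nonneg (d 0 x)) (Finset.le_sup' (fun y => |d 0 y|) (Finset.mem_univ x))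
  have hCb : ∀ y, |d 0 y| ≤ C * w y := by
    intro y
    by_cases hy : P y y = 1
    · have hd0 : d 0 y = 0 := by
        show phiSeq P p f 1 y - phiSeq P p f 0 y = 0
        show (p y * f y + (1 - p y) * step P (phiSeq P p f 0) y) - f y = 0
        rw [step_absorbing' P hP hy]
        show (p y * f y + (1 - p y) * f y) - f y = 0
        ring
      simp [hd0, hwA y hy]
    · have h1 : w y = 1 := by simp [hw, hy]
      rw [h1, mul_one, hC]
      exact Finset.le_sup' (fun z => |d 0 z|) (Finset.mem_univ y)
  have hdbound : ∀ n y, |d n y| ≤ C * ρ ^ (n / N) := by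
    intro n y
    have h1 : |d n y| ≤ C * (step P)^[n] w y := by
      rw [hd_iter n]; exact hMiter n (d 0) w C hw0 hCb y
    refine h1.trans (mul_le_mul_of_nonneg_left ?_ hC0)
    have hsplit : n / N * N + n % N = n := Nat.div_add_mod' n N
    calc (step P)^[n] w y = (step P)^[n / N * N] ((step P)^[n % N] w) y := by
          rw [← Function.iterate_add_apply, hsplit]
      _ ≤ (step P)^[n / N * N] w y := iter_mono' P hP (hiter_le_w (n % N)) _ y
      _ ≤ ρ ^ (n / N) * w y := hgeo (n / N) y
      _ ≤ ρ ^ (n / N) := by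
          have := pow_nonneg hρ0 (n / N)
          nlinarith [hw1 y, hw0 y]
  -- summability and convergence
  haveI : NeZero N := ⟨Nat.one_le_iff_ne_zero.mp hN1⟩
  have hsum : Summable (fun n : ℕ => C * ρ ^ (n / N)) := by
    apply Summable.mul_left
    have h2 : Summable (fun pr : ℕ × Fin N => ρ ^ pr.1) := by
      have hg : Summable (fun k : ℕ => ρ ^ k) := summable_geometric_of_lt_one hρ0 hρ1
      have ho : Summable (fun _ : Fin N => (1:ℝ)) := (hasSum_fintype _).summable
      have h1 := hg.mul_of_nonneg ho (fun k => pow_nonneg hρ0 k) (fun _ => zero_le_one)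
      simpa using h1
    have h3 := ((Nat.divModEquiv N).summable_iff (f := fun pr : ℕ × Fin N => ρ ^ pr.1)).mpr h2
    exact h3
  have hcauchy : ∀ y, CauchySeq (fun n => phiSeq P p f n y) := by
    intro y
    refine cauchySeq_of_dist_le_of_summable (fun n => C * ρ ^ (n / N)) ?_ hsum
    intro n
    rw [Real.dist_eq, abs_sub_comm]
    exact hdbound n y
  have hlim : ∀ y, ∃ l, Tendsto (fun n => phiSeq P p f n y) atTop (nhds l) :=
    fun y => cauchySeq_tendsto_of_complete (hcauchy y)
  choose L hL using hlim
  have hphiL : ∀ y, phi P p f y = L y := fun y => (hL y).limUnder_eq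
  have h1 : Tendsto (fun n => phiSeq P p f (n+1) x) atTop (nhds (L x)) :=
    (hL x).comp (tendsto_add_atTop_nat 1)
  have hstepT : Tendsto (fun n => step P (phiSeq P p f n) x) atTop (nhds (step P L x)) := by
    unfold step
    exact tendsto_finset_sum _ fun y _ => ((hL y).const_mul (P x y))
  have h2 : Tendsto (fun n => phiSeq P p f (n+1) x) atTop
      (nhds (p x * f x + (1 - p x) * step P L x)) := by
    have := (hstepT.const_mul (1 - p x)).const_add (p x * f x)
    exact this
  have hkey := tendsto_nhds_unique h1 h2
  have hstepeq : step P (phi P p f) x = step P L x := by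
    unfold step
    exact Finset.sum_congr rfl fun y _ => by rw [hphiL y]
  rw [hphiL x, hstepeq, hkey]

private lemma concave_tangent' (g : ℝ → ℝ) (hgc : ConcaveOn ℝ Set.univ g)
    (hg : Differentiable ℝ g) (s t : ℝ) : g t ≤ g s + deriv g s * (t - s) := by
  have hcx : ConvexOn ℝ Set.univ (fun u => -g u) := hgc.neg
  have hd : ∀ u : ℝ, DifferentiableAt ℝ (fun u => -g u) u := fun u => (hg u).neg
  have hder : deriv (fun u => -g u) s = -deriv g s := deriv.neg
  rcases lt_trichotomy t s with hts | hts | hts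
  · have hsl := hcx.slope_le_deriv (Set.mem_univ t) (Set.mem_univ s) hts (hd s)
    rw [slope_def_field, hder] at hsl
    have hpos : 0 < s - t := by linarith
    rw [div_le_iff₀ hpos] at hsl
    nlinarith [hsl]
  · subst hts; simp
  · have hsl := hcx.deriv_le_slope (Set.mem_univ s) (Set.mem_univ t) hts (hd s)
    rw [slope_def_field, hder] at hsl
    have hpos : 0 < t - s := by linarith
    rw [le_div_iff₀ hpos] at hsl
    nlinarith [hsl]


end AuxProof

/-- Corollary 4.5, second part: for concave differentiable `g`, if the first-order
condition holds with equality at every state, then the strategy is an equilibrium. -/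
theorem first_order_condition_implies_equilibrium [Fintype E] [DecidableEq E]
    (P : E → E → ℝ) (hP : IsTransition P) (habs : IsAbsorbingChain P)
    (f h : E → ℝ) (g : ℝ → ℝ)
    (hgc : ConcaveOn ℝ Set.univ g) (hg : Differentiable ℝ g)
    (phat : E → ℝ) (hphat : IsStrategy phat)
    (hFOC : ∀ x : E,
      f x - step P (phi P phat f) x
        + deriv g (phat x * h x + (1 - phat x) * step P (phi P phat h) x)
          * (h x - step P (phi P phat h) x) = 0) :
    IsEquilibrium P f h g phat := by
  intro x q _hq
  have hff := phi_fixed P hP habs phat hphat f x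
  have hhh := phi_fixed P hP habs phat hphat h x
  have htan := concave_tangent' g hgc hg
    (phat x * h x + (1 - phat x) * step P (phi P phat h) x)
    (q * h x + (1 - q) * step P (phi P phat h) x)
  have hfoc := hFOC x
  unfold Kval Jval
  rw [hff, hhh]
  set A := step P (phi P phat f) x with hA
  set B := step P (phi P phat h) x with hB
  set D := deriv g (phat x * h x + (1 - phat x) * B) with hD
  have key : (q - phat x) * (f x - A + D * (h x - B)) = 0 := by
    rw [hfoc]; ring
  have htan2 : g (q * h x + (1 - q) * B)
      ≤ g (phat x * h x + (1 - phat x) * B) + D * ((q - phat x) * (h x - B)) := by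
    refine htan.trans (le_of_eq ?_)
    ring
  nlinarith [key, htan2]
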